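/- Let t ≥ 1 and s_n = ⌊tα^n⌋. If 1 < α < 3/2, then s_{n+1} ≤ 2s_n for all n ≥ 1. If 3/2 ≤ α < (1+√5)/2, then s_{n+1} ≤ 2s_n for all n ≥ 2. If (1+√5)/2 ≤ α < 5^(1/3), then s_{n+1} ≤ 2s_n for all n ≥ 3. -/
import Mathlib

lemma key_floor (x α : ℝ) (k : ℤ) (hkx : (k : ℝ) ≤ x) (hα : 1 < α) (hα2 : α < 2)
    (hαk : α * (k + 1) ≤ 2 * k + 1) : ⌊α * x⌋ ≤ 2 * ⌊x⌋ := by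
  have hm : k ≤ ⌊x⌋ := Int.le_floor.mpr hkx
  have hmr : (k : ℝ) ≤ (⌊x⌋ : ℝ) := by exact_mod_cast hm
  have h1 : x < (⌊x⌋ : ℝ) + 1 := Int.lt_floor_add_one x
  have h2 : α * x < ((2 * ⌊x⌋ + 1 : ℤ) : ℝ) := by
    push_cast
    nlinarith [mul_nonneg (sub_nonneg.mpr hmr) (sub_nonneg.mpr hα2.le)]
  have := Int.floor_lt.mpr h2
  omega

theorem stmt_5 (t α : ℝ) (ht : 1 ≤ t) (hα : 1 < α) :
    ((α < 3 / 2 → ∀ n : ℕ, 1 ≤ n → ⌊t * α ^ (n + 1)⌋ ≤ 2 * ⌊t * α ^ n⌋) ∧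
     (3 / 2 ≤ α → α < (1 + Real.sqrt 5) / 2 →
        ∀ n : ℕ, 2 ≤ n → ⌊t * α ^ (n + 1)⌋ ≤ 2 * ⌊t * α ^ n⌋) ∧
     ((1 + Real.sqrt 5) / 2 ≤ α → α < (5 : ℝ) ^ ((1 : ℝ) / 3) →
        ∀ n : ℕ, 3 ≤ n → ⌊t * α ^ (n + 1)⌋ ≤ 2 * ⌊t * α ^ n⌋)) := by
  have hα0 : (0 : ℝ) < α := lt_trans one_pos hα
  have hxge : ∀ n : ℕ, α ^ n ≤ t * α ^ n := fun n =>
    le_mul_of_one_le_left (pow_nonneg hα0.le n) ht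
  have hrw : ∀ n : ℕ, t * α ^ (n + 1) = α * (t * α ^ n) := by
    intro n; rw [pow_succ]; ring
  have hs5 : Real.sqrt 5 ≤ 7 / 3 := by
    rw [show (7 / 3 : ℝ) = Real.sqrt ((7 / 3) ^ 2) by
      rw [Real.sqrt_sq (by norm_num)]]
    exact Real.sqrt_le_sqrt (by norm_num)
  have hs5' : (2 : ℝ) ≤ Real.sqrt 5 := by
    rw [show (2 : ℝ) = Real.sqrt 4 by rw [show (4:ℝ) = 2^2 by norm_num, Real.sqrt_sq (by norm_num)]]
    exact Real.sqrt_le_sqrt (by norm_num)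
  have hcbrt : (5 : ℝ) ^ ((1 : ℝ) / 3) ≤ 9 / 5 := by
    have h3 : ((5 : ℝ) ^ ((1 : ℝ) / 3)) ^ (3 : ℕ) = 5 := by
      rw [← Real.rpow_natCast ((5:ℝ) ^ ((1:ℝ)/3)) 3, ← Real.rpow_mul (by norm_num)]
      norm_num
    have hnn : (0 : ℝ) ≤ (5 : ℝ) ^ ((1 : ℝ) / 3) := Real.rpow_nonneg (by norm_num) _
    refine le_of_pow_le_pow_left₀ (n := 3) (by norm_num) (by norm_num) ?_
    rw [h3]; norm_num
  refine ⟨?_, ?_, ?_⟩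
  · intro h32 n hn
    rw [hrw]
    refine key_floor _ _ 1 ?_ hα (by linarith) (by push_cast; linarith)
    have : α ^ 1 ≤ α ^ n := pow_le_pow_right₀ hα.le hn
    push_cast
    calc (1:ℝ) ≤ α ^ 1 := by simpa using hα.le
    _ ≤ α ^ n := this
    _ ≤ t * α ^ n := hxge n
  · intro h32 hφ n hn
    rw [hrw]
    have hα2 : α < 2 := by nlinarith
    refine key_floor _ _ 2 ?_ hα hα2 (by push_cast; nlinarith)
    have h2 : α ^ 2 ≤ α ^ n := pow_le_pow_right₀ hα.le hn
    have h1 : (3/2 : ℝ) ^ 2 ≤ α ^ 2 := pow_le_pow_left₀ (by norm_num) h32 2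
    push_cast
    calc (2:ℝ) ≤ (3/2:ℝ)^2 := by norm_num
    _ ≤ α ^ 2 := h1
    _ ≤ α ^ n := h2
    _ ≤ t * α ^ n := hxge n
  · intro hφ hc n hn
    rw [hrw]
    have hα2 : α < 2 := by nlinarith
    refine key_floor _ _ 4 ?_ hα hα2 (by push_cast; nlinarith)
    have h2 : α ^ 3 ≤ α ^ n := pow_le_pow_right₀ hα.le hn
    have h1 : ((1 + Real.sqrt 5)/2 : ℝ) ^ 3 ≤ α ^ 3 :=
      pow_le_pow_left₀ (by positivity) hφ 3
    have hs : Real.sqrt 5 ^ 2 = 5 := Real.sq_sqrt (by norm_num)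
    push_cast
    calc (4:ℝ) ≤ ((1 + Real.sqrt 5)/2 : ℝ) ^ 3 := by nlinarith
    _ ≤ α ^ 3 := h1
    _ ≤ α ^ n := h2
    _ ≤ t * α ^ n := hxge n
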